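/- (Tropical identity for resolvent orders) Let A be an n×n matrix (over ℤ ∪ {−∞}) whose diagonal entries form a maximal transversal sum. For j ≠ n let A_{[j]} denote the matrix obtained from A by replacing column n with column j, and let 𝒪̄_{i,n} denote the tropical determinant of A with row i and column n deleted. Then Σ_{i=1}^n 𝒪̄_{i,n} = Σ_{j=1}^{n−1} |A_{[j]}|_T, where |·|_T is the tropical determinant; equivalently Σ_{i=1}^n 𝒪̄_{i,n} = Σ_{j≠n} max_{i=1}^n (𝒪̄_{i,n} + a_{i,j}). -/

import Mathlib

open Finset

/-- Tropical determinant of the submatrix of `A` with rows in `I` and columns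
in `J`: the maximum over bijections `e : I ≃ J` of `∑_{i ∈ I} A i (e i)`. -/
noncomputable def tdetSub {m : ℕ} (A : Fin m → Fin m → WithBot ℤ)
    (I J : Finset (Fin m)) : WithBot ℤ :=
  (Finset.univ : Finset (↥I ≃ ↥J)).sup fun e => ∑ i : ↥I, A i (e i)

/-- The full tropical determinant: max over permutations of the transversal sums. -/
noncomputable def tdetFull {m : ℕ} (A : Fin m → Fin m → WithBot ℤ) : WithBot ℤ :=
  Finset.univ.sup fun σ : Equiv.Perm (Fin m) => ∑ i, A i (σ i)



/-- Integer Birkhoff: a `ℕ`-matrix with all row and column sums equal to `m`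
decomposes as a sum of `m` permutation matrices. -/
theorem nat_birkhoff' {N : ℕ} : ∀ (m : ℕ) (X : Fin N → Fin N → ℕ),
    (∀ r, ∑ c, X r c = m) → (∀ c, ∑ r, X r c = m) →
    ∃ f : Fin m → Equiv.Perm (Fin N),
      ∀ r c, X r c = (Finset.univ.filter fun t => f t r = c).card := by
  intro m
  induction m with
  | zero =>
    intro X hr _
    refine ⟨fun t => t.elim0, fun r c => ?_⟩
    have h0 : X r c = 0 := by
      have := hr r
      have : X r c ≤ 0 := this ▸ Finset.single_le_sum (f := X r) (fun _ _ => Nat.zero_le _) (mem_univ c)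
      omega
    simp [h0, Finset.filter_eq_empty_iff]
  | succ m ih =>
    intro X hr hc
    -- find a permutation in the support via Hall
    have hall : ∀ s : Finset (Fin N), s.card ≤ (s.biUnion fun r => univ.filter fun c => 0 < X r c).card := by
      intro s
      have key : (m+1) * s.card ≤ (m+1) * (s.biUnion fun r => univ.filter fun c => 0 < X r c).card := by
        calc (m+1) * s.card = ∑ r ∈ s, (m+1) := by rw [Finset.sum_const, smul_eq_mul, mul_comm]
        _ = ∑ r ∈ s, ∑ c, X r c := by exact Finset.sum_congr rfl fun r _ => (hr r).symm
        _ = ∑ r ∈ s, ∑ c ∈ univ.filter fun c => 0 < X r c, X r c := by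
              refine Finset.sum_congr rfl fun r _ => ?_
              rw [Finset.sum_filter_of_ne]
              intro c _ h; omega
        _ ≤ ∑ r ∈ s, ∑ c ∈ (s.biUnion fun r => univ.filter fun c => 0 < X r c), X r c := by
              refine Finset.sum_le_sum fun r hrs => Finset.sum_le_sum_of_subset ?_
              exact Finset.subset_biUnion_of_mem (fun r => univ.filter fun c => 0 < X r c) hrs
        _ = ∑ c ∈ (s.biUnion fun r => univ.filter fun c => 0 < X r c), ∑ r ∈ s, X r c := by rw [Finset.sum_comm]
        _ ≤ ∑ c ∈ (s.biUnion fun r => univ.filter fun c => 0 < X r c), ∑ r, X r c := by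
              refine Finset.sum_le_sum fun c _ => ?_
              exact Finset.sum_le_sum_of_subset (Finset.subset_univ s)
        _ = ∑ c ∈ (s.biUnion fun r => univ.filter fun c => 0 < X r c), (m+1) := by
              exact Finset.sum_congr rfl fun c _ => hc c
        _ = (m+1) * (s.biUnion fun r => univ.filter fun c => 0 < X r c).card := by
              rw [Finset.sum_const, smul_eq_mul, mul_comm]
      exact Nat.le_of_mul_le_mul_left key (Nat.succ_pos m)
    obtain ⟨g, hginj, hgmem⟩ :=
      (Finset.all_card_le_biUnion_card_iff_exists_injective
        (fun r : Fin N => univ.filter fun c => 0 < X r c)).mp hall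
    let σ : Equiv.Perm (Fin N) := Equiv.ofBijective g (Finite.injective_iff_bijective.mp hginj)
    have hσ : ∀ r, 0 < X r (σ r) := by
      intro r
      have := hgmem r
      exact (Finset.mem_filter.mp this).2
    -- subtract the permutation matrix
    set Y : Fin N → Fin N → ℕ := fun r c => X r c - (if σ r = c then 1 else 0) with hY
    have hXY : ∀ r c, X r c = Y r c + (if σ r = c then 1 else 0) := by
      intro r c
      by_cases h : σ r = c
      · have := hσ r; simp [hY, h] at *; omega
      · simp [hY, h]
    have hYr : ∀ r, ∑ c, Y r c = m := by
      intro r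
      have h1 : ∑ c, X r c = (∑ c, Y r c) + ∑ c, (if σ r = c then 1 else 0) := by
        rw [← Finset.sum_add_distrib]; exact Finset.sum_congr rfl fun c _ => hXY r c
      have h2 : ∑ c, (if σ r = c then (1:ℕ) else 0) = 1 := by simp
      have := hr r; omega
    have hYc : ∀ c, ∑ r, Y r c = m := by
      intro c
      have h1 : ∑ r, X r c = (∑ r, Y r c) + ∑ r, (if σ r = c then 1 else 0) := by
        rw [← Finset.sum_add_distrib]; exact Finset.sum_congr rfl fun r _ => hXY r c
      have h2 : ∑ r, (if σ r = c then (1:ℕ) else 0) = 1 := by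
        simp [Equiv.apply_eq_iff_eq_symm_apply]
      have := hc c; omega
    obtain ⟨f', hf'⟩ := ih Y hYr hYc
    refine ⟨Fin.cases σ f', fun r c => ?_⟩
    have hcard : (Finset.univ.filter fun t : Fin (m+1) => (Fin.cases σ f' t : Equiv.Perm (Fin N)) r = c).card
        = ∑ t : Fin (m+1), (if (Fin.cases σ f' t : Equiv.Perm (Fin N)) r = c then 1 else 0) := by
      rw [Finset.card_filter]
    rw [hcard, Fin.sum_univ_succ]
    have hcard' : (Finset.univ.filter fun t : Fin m => f' t r = c).card
        = ∑ t : Fin m, (if f' t r = c then 1 else 0) := by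
      rw [Finset.card_filter]
    simp only [Fin.cases_zero, Fin.cases_succ]
    rw [hXY r c, hf' r c, hcard']
    rw [add_comm]; rfl


/-- If two functions into `γ` have fibers of equal cardinality, there is an
equivalence of domains commuting with them. -/
theorem fiber_equiv' {α β γ : Type*} [Fintype α] [Fintype β] [DecidableEq γ]
    (f : α → γ) (g : β → γ)
    (h : ∀ c, (Finset.univ.filter fun a => f a = c).card
            = (Finset.univ.filter fun b => g b = c).card) :
    ∃ e : α ≃ β, ∀ a, g (e a) = f a := by
  have hcard : ∀ c : γ, Fintype.card {a // f a = c} = Fintype.card {b // g b = c} := by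
    intro c
    rw [Fintype.card_subtype, Fintype.card_subtype]
    exact h c
  refine ⟨(Equiv.sigmaFiberEquiv f).symm.trans
    ((Equiv.sigmaCongrRight fun c => Fintype.equivOfCardEq (hcard c)).trans
      (Equiv.sigmaFiberEquiv g)), fun a => ?_⟩
  have h1 : (Equiv.sigmaFiberEquiv f).symm a = ⟨f a, a, rfl⟩ := rfl
  simp [h1, Equiv.sigmaCongrRight, Equiv.sigmaFiberEquiv]
  exact (Fintype.equivOfCardEq (hcard (f a)) ⟨a, rfl⟩).2

theorem sup_add_wb {α : Type*} (s : Finset α) (f : α → WithBot ℤ) (a : WithBot ℤ) :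
    s.sup f + a = s.sup fun x => f x + a := by
  induction s using Finset.cons_induction with
  | empty => simp
  | cons x s hx ih =>
    rw [Finset.sup_cons, Finset.sup_cons, ← ih]
    exact (max_add_add_right _ _ _).symm

/-- Extend a bijection `{i}ᶜ ≃ {j}ᶜ` to a permutation sending `i` to `j`. -/
def extPerm {N : ℕ} (i j : Fin N)
    (e : ↥({i}ᶜ : Finset (Fin N)) ≃ ↥({j}ᶜ : Finset (Fin N))) : Equiv.Perm (Fin N) where
  toFun x := if h : x = i then j else (e ⟨x, by simp [h]⟩ : Fin N)
  invFun y := if h : y = j then i else (e.symm ⟨y, by simp [h]⟩ : Fin N)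
  left_inv := by
    intro x
    by_cases h : x = i
    · simp [h]
    · have hm : x ∈ ({i}ᶜ : Finset (Fin N)) := by simp [h]
      have hne : ((e ⟨x, hm⟩ : ↥({j}ᶜ : Finset (Fin N))) : Fin N) ≠ j := by
        have h2 := (e ⟨x, hm⟩).2
        rw [Finset.mem_compl, Finset.mem_singleton] at h2
        exact h2
      simp only [dif_neg h, dif_neg hne]
      have : (⟨((e ⟨x, hm⟩ : ↥({j}ᶜ : Finset (Fin N))) : Fin N), (e ⟨x, hm⟩).2⟩ :
          ↥({j}ᶜ : Finset (Fin N))) = e ⟨x, hm⟩ := rfl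
      rw [this, Equiv.symm_apply_apply]
  right_inv := by
    intro y
    by_cases h : y = j
    · simp [h]
    · have hm : y ∈ ({j}ᶜ : Finset (Fin N)) := by simp [h]
      have hne : ((e.symm ⟨y, hm⟩ : ↥({i}ᶜ : Finset (Fin N))) : Fin N) ≠ i := by
        have h2 := (e.symm ⟨y, hm⟩).2
        rw [Finset.mem_compl, Finset.mem_singleton] at h2
        exact h2
      simp only [dif_neg h, dif_neg hne]
      have : (⟨((e.symm ⟨y, hm⟩ : ↥({i}ᶜ : Finset (Fin N))) : Fin N), (e.symm ⟨y, hm⟩).2⟩ :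
          ↥({i}ᶜ : Finset (Fin N))) = e.symm ⟨y, hm⟩ := rfl
      rw [this, Equiv.apply_symm_apply]

theorem extPerm_apply_self {N : ℕ} (i j : Fin N)
    (e : ↥({i}ᶜ : Finset (Fin N)) ≃ ↥({j}ᶜ : Finset (Fin N))) : extPerm i j e i = j :=
  dif_pos rfl

theorem extPerm_apply_ne {N : ℕ} (i j : Fin N)
    (e : ↥({i}ᶜ : Finset (Fin N)) ≃ ↥({j}ᶜ : Finset (Fin N))) (x : Fin N) (h : x ≠ i)
    (hm : x ∈ ({i}ᶜ : Finset (Fin N))) : extPerm i j e x = (e ⟨x, hm⟩ : Fin N) :=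
  dif_neg h

/-- `tdetSub` over complements of singletons as a sup over permutations. -/
theorem tdetSub_eq_permSup {N : ℕ} (A : Fin N → Fin N → WithBot ℤ) (i j : Fin N) :
    tdetSub A ({i}ᶜ) ({j}ᶜ) =
      (Finset.univ.filter fun σ : Equiv.Perm (Fin N) => σ i = j).sup
        fun σ => ∑ k ∈ ({i}ᶜ : Finset (Fin N)), A k (σ k) := by
  apply le_antisymm
  · apply Finset.sup_le
    intro e _
    set σ := extPerm i j e with hσ
    have hmem : σ ∈ Finset.univ.filter fun σ : Equiv.Perm (Fin N) => σ i = j := by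
      simp [Finset.mem_filter, hσ, extPerm_apply_self]
    refine le_trans (le_of_eq ?_) (Finset.le_sup hmem)
    have : ∀ k : ↥({i}ᶜ : Finset (Fin N)), A k (e k) = A k (σ k) := by
      intro k
      have hk : (k : Fin N) ≠ i := by
        have h2 := k.2
        rw [Finset.mem_compl, Finset.mem_singleton] at h2
        exact h2
      rw [extPerm_apply_ne i j e k hk k.2]
    calc ∑ k : ↥({i}ᶜ : Finset (Fin N)), A k (e k)
        = ∑ k : ↥({i}ᶜ : Finset (Fin N)), A k (σ k) := by
          exact Finset.sum_congr rfl fun k _ => this k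
      _ = ∑ k ∈ ({i}ᶜ : Finset (Fin N)), A k (σ k) :=
          Finset.sum_coe_sort _ (fun k => A k (σ k))
  · apply Finset.sup_le
    intro σ hσ
    rw [Finset.mem_filter] at hσ
    have hiff : ∀ x : Fin N, x ∈ ({i}ᶜ : Finset (Fin N)) ↔ σ x ∈ ({j}ᶜ : Finset (Fin N)) := by
      intro x
      simp only [Finset.mem_compl, Finset.mem_singleton]
      rw [← hσ.2]
      exact not_congr (EmbeddingLike.apply_eq_iff_eq σ).symm
    set e : ↥({i}ᶜ : Finset (Fin N)) ≃ ↥({j}ᶜ : Finset (Fin N)) := σ.subtypeEquiv hiff with he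
    refine le_trans (le_of_eq ?_) (Finset.le_sup (Finset.mem_univ e))
    calc ∑ k ∈ ({i}ᶜ : Finset (Fin N)), A k (σ k)
        = ∑ k : ↥({i}ᶜ : Finset (Fin N)), A k (σ k) :=
          (Finset.sum_coe_sort _ (fun k => A k (σ k))).symm
      _ = ∑ k : ↥({i}ᶜ : Finset (Fin N)), A k (e k) := rfl


/-- The value of a multiplicity matrix. -/
noncomputable def valM {N : ℕ} (A : Fin N → Fin N → WithBot ℤ) (W : Fin N → Fin N → ℕ) :
    WithBot ℤ := ∑ r, ∑ c, W r c • A r c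

theorem val_family {N : ℕ} (A : Fin N → Fin N → WithBot ℤ) (L : Fin N) {κ : Type*}
    [DecidableEq κ] (s : Finset κ) (σ : κ → Equiv.Perm (Fin N)) (ι : κ → Fin N)
    (h : ∀ j ∈ s, σ j (ι j) = L) :
    ∑ j ∈ s, ∑ k ∈ ({ι j}ᶜ : Finset (Fin N)), A k (σ j k)
      = valM A (fun r c => if c = L then 0 else (s.filter fun j => σ j r = c).card) := by
  have step1 : ∀ j ∈ s, ∑ k ∈ ({ι j}ᶜ : Finset (Fin N)), A k (σ j k)
      = ∑ r, ∑ c, (if c = L then 0 else if σ j r = c then A r c else 0) := by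
    intro j hj
    have hfil : ({ι j}ᶜ : Finset (Fin N)) = univ.filter fun k => ¬ (σ j k = L) := by
      ext k
      simp only [Finset.mem_compl, Finset.mem_singleton, Finset.mem_filter, Finset.mem_univ,
        true_and]
      rw [← h j hj]
      exact not_congr (EmbeddingLike.apply_eq_iff_eq (σ j)).symm
    rw [hfil, Finset.sum_filter]
    refine Finset.sum_congr rfl fun r _ => ?_
    rw [Finset.sum_eq_single_of_mem (σ j r) (Finset.mem_univ _)]
    · by_cases hL : σ j r = L <;> simp [hL]
    · intro c _ hne
      by_cases hL : c = L
      · simp [hL]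
      · simp [hL, Ne.symm hne]
  calc ∑ j ∈ s, ∑ k ∈ ({ι j}ᶜ : Finset (Fin N)), A k (σ j k)
      = ∑ j ∈ s, ∑ r, ∑ c, (if c = L then 0 else if σ j r = c then A r c else 0) :=
        Finset.sum_congr rfl step1
    _ = ∑ r, ∑ j ∈ s, ∑ c, (if c = L then 0 else if σ j r = c then A r c else 0) :=
        Finset.sum_comm
    _ = ∑ r, ∑ c, ∑ j ∈ s, (if c = L then 0 else if σ j r = c then A r c else 0) :=
        Finset.sum_congr rfl fun r _ => Finset.sum_comm
    _ = valM A (fun r c => if c = L then 0 else (s.filter fun j => σ j r = c).card) := by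
        refine Finset.sum_congr rfl fun r _ => Finset.sum_congr rfl fun c _ => ?_
        by_cases hL : c = L
        · simp [hL]
        · simp only [if_neg hL]
          rw [Finset.sum_ite, Finset.sum_const, Finset.sum_const_zero, add_zero]

theorem val_extra {N : ℕ} (A : Fin N → Fin N → WithBot ℤ) (L : Fin N) (ι : Fin N → Fin N) :
    ∑ j ∈ univ.erase L, A (ι j) j
      = valM A (fun r c => if c = L then 0 else if ι c = r then 1 else 0) := by
  rw [valM, Finset.sum_comm]
  rw [show (univ.erase L : Finset (Fin N)) = univ.filter fun c => ¬ (c = L) by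
    ext c; simp [Finset.mem_erase, and_comm]]
  rw [Finset.sum_filter]
  refine Finset.sum_congr rfl fun c _ => ?_
  by_cases hL : c = L
  · simp [hL]
  · simp only [if_neg hL]
    rw [Finset.sum_eq_single_of_mem (ι c) (Finset.mem_univ _)]
    · simp [hL]
    · intro r _ hne
      simp [Ne.symm hne]

theorem valM_add {N : ℕ} (A : Fin N → Fin N → WithBot ℤ) (W W' : Fin N → Fin N → ℕ) :
    valM A (fun r c => W r c + W' r c) = valM A W + valM A W' := by
  rw [valM, valM, valM, ← Finset.sum_add_distrib]
  refine Finset.sum_congr rfl fun r _ => ?_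
  rw [← Finset.sum_add_distrib]
  exact Finset.sum_congr rfl fun c _ => add_nsmul _ _ _

theorem sum_count {κ : Type*} [DecidableEq κ] {N : ℕ} (s : Finset κ) (v : κ → Fin N) :
    ∑ c, (s.filter fun j => v j = c).card = s.card := by
  have : ∀ c : Fin N, (s.filter fun j => v j = c).card = ∑ j ∈ s, (if v j = c then 1 else 0) := by
    intro c; rw [Finset.card_filter]
  rw [Finset.sum_congr rfl fun c _ => this c, Finset.sum_comm]
  rw [Finset.card_eq_sum_ones]
  refine Finset.sum_congr rfl fun j _ => ?_
  simp

theorem card_filter_equiv {α β : Type*} [Fintype α] [Fintype β] [DecidableEq α] [DecidableEq β]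
    (e : α ≃ β) (P : β → Prop) [DecidablePred P] :
    (Finset.univ.filter fun a => P (e a)).card = (Finset.univ.filter fun b => P b).card := by
  refine Finset.card_bij (fun a _ => e a) ?_ ?_ ?_
  · intro a ha
    rw [Finset.mem_filter] at ha ⊢
    exact ⟨Finset.mem_univ _, ha.2⟩
  · intro a _ a' _ hh
    exact e.injective hh
  · intro b hb
    rw [Finset.mem_filter] at hb
    exact ⟨e.symm b, by rw [Finset.mem_filter]; simpa using hb.2, by simp⟩

theorem card_filter_coe {α : Type*} [DecidableEq α] (s : Finset α) (p : α → Prop)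
    [DecidablePred p] :
    (Finset.univ.filter fun x : ↥s => p ↑x).card = (s.filter p).card := by
  refine Finset.card_bij (fun x _ => (x : α)) ?_ ?_ ?_
  · intro x hx
    rw [Finset.mem_filter] at hx ⊢
    exact ⟨x.2, hx.2⟩
  · intro x _ x' _ hh
    exact Subtype.ext hh
  · intro b hb
    rw [Finset.mem_filter] at hb
    exact ⟨⟨b, hb.1⟩, by rw [Finset.mem_filter]; exact ⟨Finset.mem_univ _, hb.2⟩, rfl⟩

theorem perm_filter_col {N : ℕ} (σ : Equiv.Perm (Fin N)) (c : Fin N) :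
    (Finset.univ.filter fun r => σ r = c) = {σ.symm c} := by
  ext r
  simp [Equiv.apply_eq_iff_eq_symm_apply]

/-- Decompose a multiplicity matrix into an "LHS-shaped" family. -/
theorem exists_LHS_family {N : ℕ} (L : Fin N) (W : Fin N → Fin N → ℕ)
    (hL : ∀ r, W r L = 0) (hrow : ∀ r, (∑ c, W r c) + 1 = N)
    (hcol : ∀ c, c ≠ L → ∑ r, W r c = N) :
    ∃ ρ : Fin N → Equiv.Perm (Fin N), (∀ i, ρ i i = L) ∧
      ∀ r c, c ≠ L → (Finset.univ.filter fun i => ρ i r = c).card = W r c := by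
  classical
  set X : Fin N → Fin N → ℕ := fun r c => W r c + if c = L then 1 else 0 with hX
  have hrX : ∀ r, ∑ c, X r c = N := by
    intro r
    rw [Finset.sum_add_distrib]
    have : ∑ c, (if c = L then 1 else 0) = 1 := by simp
    rw [this]; exact hrow r
  have hcX : ∀ c, ∑ r, X r c = N := by
    intro c
    by_cases h : c = L
    · have : ∀ r, X r c = 1 := fun r => by simp [hX, h, hL]
      rw [Finset.sum_congr rfl fun r _ => this r]
      simp
    · have : ∀ r, X r c = W r c := fun r => by simp [hX, h]
      rw [Finset.sum_congr rfl fun r _ => this r]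
      exact hcol c h
  obtain ⟨f, hf⟩ := nat_birkhoff' N X hrX hcX
  have hfib : ∀ r : Fin N,
      (Finset.univ.filter fun t : Fin N => (f t).symm L = r).card
      = (Finset.univ.filter fun i : Fin N => (id i : Fin N) = r).card := by
    intro r
    have h1 : (Finset.univ.filter fun t : Fin N => (f t).symm L = r)
        = Finset.univ.filter fun t : Fin N => f t r = L := by
      ext t
      simp only [Finset.mem_filter, Finset.mem_univ, true_and]
      exact ⟨fun h => by rw [← h]; simp, fun h => by rw [← h]; simp⟩
    rw [h1, ← hf r L]
    have h2 : (Finset.univ.filter fun i : Fin N => (id i : Fin N) = r) = {r} := by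
      ext i; simp
    rw [h2]
    simp [hX, hL r]
  obtain ⟨e, he⟩ := fiber_equiv' (fun t => (f t).symm L) (id : Fin N → Fin N) hfib
  refine ⟨fun i => f (e.symm i), fun i => ?_, fun r c hc' => ?_⟩
  · have h3 := he (e.symm i)
    simp only [id_eq, Equiv.apply_symm_apply] at h3
    have h4 : (f (e.symm i)).symm L = i := h3.symm
    exact ((Equiv.symm_apply_eq _).mp h4).symm
  · rw [card_filter_equiv e.symm (fun t => f t r = c), ← hf r c]
    simp [hX, hc']

/-- Decompose a multiplicity matrix into an "RHS-shaped" family. -/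
theorem exists_RHS_family {N : ℕ} (L : Fin N) (W : Fin N → Fin N → ℕ)
    (hL : ∀ r, W r L = 0) (hrow : ∀ r, (∑ c, W r c) + 1 = N)
    (hcol : ∀ c, c ≠ L → ∑ r, W r c = N) :
    ∃ (ι : Fin N → Fin N) (σ : Fin N → Equiv.Perm (Fin N)),
      (∀ j ∈ Finset.univ.erase L, σ j (ι j) = L) ∧
      ∀ r c, c ≠ L →
        ((Finset.univ.erase L).filter fun j => σ j r = c).card
          + (if ι c = r then 1 else 0) = W r c := by
  classical
  have hN : 0 < N := L.pos
  set m := (Finset.univ.erase L).card with hm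
  have hm1 : m + 1 = N := by
    rw [hm, Finset.card_erase_add_one (Finset.mem_univ L), Finset.card_univ, Fintype.card_fin]
  -- choose a positive entry in each column ≠ L
  have hex : ∀ c : Fin N, ∃ r, c ≠ L → 0 < W r c := by
    intro c
    by_cases h : c = L
    · exact ⟨L, fun h' => absurd h h'⟩
    · by_contra hcon
      push_neg at hcon
      have hz : ∀ r, W r c = 0 := fun r => by have h2 := (hcon r).2; omega
      have hs := hcol c h
      rw [Finset.sum_congr rfl fun r _ => hz r, Finset.sum_const_zero] at hs
      omega
  choose ι hι using hex
  set Y : Fin N → Fin N → ℕ :=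
    fun r c => W r c - (if c ≠ L ∧ ι c = r then 1 else 0) with hY
  have hWY : ∀ r c, W r c = Y r c + (if c ≠ L ∧ ι c = r then 1 else 0) := by
    intro r c
    by_cases h : c ≠ L ∧ ι c = r
    · have h2 := hι c h.1
      rw [h.2] at h2
      simp only [hY, if_pos h]
      omega
    · simp [hY, h]
  set Z : Fin N → Fin N → ℕ :=
    fun r c => if c = L then ((Finset.univ.erase L).filter fun j => ι j = r).card
      else Y r c with hZ
  have hrZ : ∀ r, ∑ c, Z r c = m := by
    intro r
    have e1 : ∑ c, Z r c
        = ∑ c, ((if c = L then ((Finset.univ.erase L).filter fun j => ι j = r).card else 0)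
          + Y r c) := by
      refine Finset.sum_congr rfl fun c _ => ?_
      by_cases h : c = L
      · subst h; simp [hZ, hY, hL r]
      · simp [hZ, h]
    rw [e1, Finset.sum_add_distrib]
    have e2 : ∑ c, (if c = L then ((Finset.univ.erase L).filter fun j => ι j = r).card else 0)
        = ((Finset.univ.erase L).filter fun j => ι j = r).card := by simp
    have e3 : (∑ c, Y r c) + ∑ c, (if c ≠ L ∧ ι c = r then 1 else 0) = ∑ c, W r c := by
      rw [← Finset.sum_add_distrib]
      exact Finset.sum_congr rfl fun c _ => (hWY r c).symm
    have e4 : ∑ c, (if c ≠ L ∧ ι c = r then 1 else 0)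
        = ((Finset.univ.erase L).filter fun j => ι j = r).card := by
      rw [Finset.card_filter]
      rw [← Finset.sum_erase_add _ _ (Finset.mem_univ L)]
      simp only [ne_eq, not_true_eq_false, false_and, if_false, add_zero]
      refine Finset.sum_congr rfl fun c hcmem => ?_
      rw [Finset.mem_erase] at hcmem
      simp [hcmem.1]
    have := hrow r
    omega
  have hcZ : ∀ c, ∑ r, Z r c = m := by
    intro c
    by_cases h : c = L
    · have hZL : ∀ r, Z r c = ((Finset.univ.erase L).filter fun j => ι j = r).card := by
        intro r; simp [hZ, h]
      rw [Finset.sum_congr rfl fun r _ => hZL r]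
      exact sum_count _ _
    · have e1 : ∀ r, Z r c = Y r c := fun r => by simp [hZ, h]
      rw [Finset.sum_congr rfl fun r _ => e1 r]
      have e2 : (∑ r, Y r c) + ∑ r, (if c ≠ L ∧ ι c = r then 1 else 0) = ∑ r, W r c := by
        rw [← Finset.sum_add_distrib]
        exact Finset.sum_congr rfl fun r _ => (hWY r c).symm
      have e3 : ∑ r, (if c ≠ L ∧ ι c = r then 1 else 0) = 1 := by
        have : ∀ r, (if c ≠ L ∧ ι c = r then 1 else 0) = if ι c = r then 1 else 0 := by
          intro r
          by_cases h2 : ι c = r <;> simp [h, h2]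
        rw [Finset.sum_congr rfl fun r _ => this r]
        simp
      have := hcol c h
      omega
  obtain ⟨π, hπ⟩ := nat_birkhoff' m Z hrZ hcZ
  have hfib : ∀ r : Fin N,
      (Finset.univ.filter fun t : Fin m => (π t).symm L = r).card
      = (Finset.univ.filter fun j : ↥(Finset.univ.erase L) => ι (j : Fin N) = r).card := by
    intro r
    have h1 : (Finset.univ.filter fun t : Fin m => (π t).symm L = r)
        = Finset.univ.filter fun t : Fin m => π t r = L := by
      ext t
      simp only [Finset.mem_filter, Finset.mem_univ, true_and]
      exact ⟨fun h => by rw [← h]; simp, fun h => by rw [← h]; simp⟩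
    rw [h1, ← hπ r L]
    rw [card_filter_coe (Finset.univ.erase L) (fun j => ι j = r)]
    simp [hZ]
  obtain ⟨e, he⟩ := fiber_equiv' (fun t => (π t).symm L)
    (fun j : ↥(Finset.univ.erase L) => ι (j : Fin N)) hfib
  set σ : Fin N → Equiv.Perm (Fin N) :=
    fun j => if h : j ∈ Finset.univ.erase L then π (e.symm ⟨j, h⟩) else 1 with hσ
  refine ⟨ι, σ, fun j hj => ?_, fun r c hc' => ?_⟩
  · have h1 : σ j = π (e.symm ⟨j, hj⟩) := dif_pos hj
    have h2 := he (e.symm ⟨j, hj⟩)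
    rw [Equiv.apply_symm_apply] at h2
    rw [h1]
    have h3 : (π (e.symm ⟨j, hj⟩)).symm L = ι j := h2.symm
    exact ((Equiv.symm_apply_eq _).mp h3).symm
  · have h1 : ((Finset.univ.erase L).filter fun j => σ j r = c).card
        = (Finset.univ.filter fun j : ↥(Finset.univ.erase L) => σ (j : Fin N) r = c).card :=
      (card_filter_coe _ _).symm
    have h2 : (Finset.univ.filter fun j : ↥(Finset.univ.erase L) => σ (j : Fin N) r = c)
        = Finset.univ.filter fun j : ↥(Finset.univ.erase L) => π (e.symm j) r = c := by
      ext j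
      have hsj : σ (j : Fin N) = π (e.symm j) := dif_pos j.2
      simp [hsj]
    rw [h1, h2, card_filter_equiv e.symm (fun t => π t r = c), ← hπ r c]
    have h3 : Z r c = Y r c := by simp [hZ, hc']
    rw [h3]
    have := hWY r c
    have h4 : (if c ≠ L ∧ ι c = r then 1 else 0) = (if ι c = r then 1 else 0) := by
      by_cases h5 : ι c = r <;> simp [hc', h5]
    omega

theorem sum_card_filter_perm {κ : Type*} [DecidableEq κ] {N : ℕ} (s : Finset κ)
    (σ : κ → Equiv.Perm (Fin N)) (c : Fin N) :
    ∑ r, (s.filter fun j => σ j r = c).card = s.card := by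
  have h1 : ∀ r : Fin N, (s.filter fun j => σ j r = c).card
      = ∑ j ∈ s, (if σ j r = c then 1 else 0) := fun r => Finset.card_filter _ _
  rw [Finset.sum_congr rfl fun r _ => h1 r, Finset.sum_comm, Finset.card_eq_sum_ones]
  refine Finset.sum_congr rfl fun j _ => ?_
  have h2 : ∑ r, (if σ j r = c then 1 else 0) = (Finset.univ.filter fun r => σ j r = c).card :=
    (Finset.card_filter _ _).symm
  rw [h2, perm_filter_col, Finset.card_singleton]

theorem sum_ite_erase {M : Type*} [AddCommMonoid M] {N : ℕ} (L : Fin N) (F : Fin N → M) :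
    ∑ c, (if c = L then 0 else F c) = ∑ c ∈ Finset.univ.erase L, F c := by
  rw [← Finset.sum_erase_add _ (fun c => if c = L then 0 else F c) (Finset.mem_univ L),
    if_pos rfl, add_zero]
  refine Finset.sum_congr rfl fun c hc => ?_
  rw [Finset.mem_erase] at hc
  simp [hc.1]

/-- The inner sup of the tropical subdeterminant, as a sup over permutations. -/
noncomputable def permP {N : ℕ} (A : Fin N → Fin N → WithBot ℤ) (L i : Fin N) : WithBot ℤ :=
  (Finset.univ.filter fun σ : Equiv.Perm (Fin N) => σ i = L).sup
    fun σ => ∑ k ∈ ({i}ᶜ : Finset (Fin N)), A k (σ k)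

theorem permP_filter_nonempty {N : ℕ} (L i : Fin N) :
    (Finset.univ.filter fun σ : Equiv.Perm (Fin N) => σ i = L).Nonempty :=
  ⟨Equiv.swap i L, by simp [Equiv.swap_apply_left]⟩

theorem permP_def {N : ℕ} (A : Fin N → Fin N → WithBot ℤ) (L i : Fin N) :
    permP A L i = (Finset.univ.filter fun σ : Equiv.Perm (Fin N) => σ i = L).sup
      (fun σ => ∑ k ∈ ({i}ᶜ : Finset (Fin N)), A k (σ k)) := rfl

theorem main_sum {N : ℕ} (A : Fin N → Fin N → WithBot ℤ) (L : Fin N) :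
    ∑ i, permP A L i
      = ∑ j ∈ Finset.univ.erase L, (Finset.univ.sup fun i => permP A L i + A i j) := by
  classical
  have hm1 : (Finset.univ.erase L).card + 1 = N := by
    rw [Finset.card_erase_add_one (Finset.mem_univ L), Finset.card_univ, Fintype.card_fin]
  apply le_antisymm
  -- direction ≤
  · have hch : ∀ i : Fin N, ∃ σ : Equiv.Perm (Fin N),
        σ i = L ∧ permP A L i = ∑ k ∈ ({i}ᶜ : Finset (Fin N)), A k (σ k) := by
      intro i
      obtain ⟨σ, hmem, heq⟩ :=
        Finset.exists_mem_eq_sup _ (permP_filter_nonempty L i)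
          (fun σ : Equiv.Perm (Fin N) => ∑ k ∈ ({i}ᶜ : Finset (Fin N)), A k (σ k))
      rw [Finset.mem_filter] at hmem
      exact ⟨σ, hmem.2, heq⟩
    choose σs hσL hσP using hch
    set W : Fin N → Fin N → ℕ :=
      fun r c => if c = L then 0 else (Finset.univ.filter fun i => σs i r = c).card with hW
    have hWL : ∀ r, W r L = 0 := fun r => by simp [hW]
    have hfL : ∀ r : Fin N, (Finset.univ.filter fun i => σs i r = L) = {r} := by
      intro r
      ext i
      simp only [Finset.mem_filter, Finset.mem_univ, true_and, Finset.mem_singleton]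
      constructor
      · intro h
        have : σs i r = σs i i := by rw [h, hσL i]
        exact ((σs i).injective this).symm
      · intro h; rw [← h]; exact hσL i
    have hrow : ∀ r, (∑ c, W r c) + 1 = N := by
      intro r
      have e1 : ∑ c, (Finset.univ.filter fun i => σs i r = c).card = N := by
        rw [sum_count univ (fun i => σs i r), Finset.card_univ, Fintype.card_fin]
      have e2 : ∑ c ∈ Finset.univ.erase L, (Finset.univ.filter fun i => σs i r = c).card
            + (Finset.univ.filter fun i => σs i r = L).card
          = ∑ c, (Finset.univ.filter fun i => σs i r = c).card :=
        Finset.sum_erase_add _ _ (Finset.mem_univ L)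
      have e3 : ∑ c ∈ Finset.univ.erase L, W r c + W r L = ∑ c, W r c :=
        Finset.sum_erase_add _ _ (Finset.mem_univ L)
      have e4 : ∑ c ∈ Finset.univ.erase L, W r c
          = ∑ c ∈ Finset.univ.erase L, (Finset.univ.filter fun i => σs i r = c).card := by
        refine Finset.sum_congr rfl fun c hc => ?_
        rw [Finset.mem_erase] at hc
        simp [hW, hc.1]
      have e5 : (Finset.univ.filter fun i => σs i r = L).card = 1 := by
        rw [hfL r, Finset.card_singleton]
      have e6 := hWL r
      omega
    have hcol : ∀ c, c ≠ L → ∑ r, W r c = N := by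
      intro c hc
      have e1 : ∀ r, W r c = (Finset.univ.filter fun i => σs i r = c).card := fun r => by
        simp [hW, hc]
      rw [Finset.sum_congr rfl fun r _ => e1 r, sum_card_filter_perm univ σs c,
        Finset.card_univ, Fintype.card_fin]
    obtain ⟨ι, σ', hσ'L, hcount⟩ := exists_RHS_family L W hWL hrow hcol
    have hval1 : ∑ i, permP A L i = valM A W := by
      rw [Finset.sum_congr rfl fun i _ => hσP i, hW]
      exact val_family A L Finset.univ σs (fun i => i) (fun i _ => hσL i)
    have hval2 : valM A W
        = ∑ j ∈ Finset.univ.erase L,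
            ((∑ k ∈ ({ι j}ᶜ : Finset (Fin N)), A k (σ' j k)) + A (ι j) j) := by
      rw [Finset.sum_add_distrib]
      rw [val_family A L (Finset.univ.erase L) σ' ι hσ'L, val_extra A L ι, ← valM_add]
      congr 1
      funext r c
      by_cases h : c = L
      · simp [hW, h]
      · simp only [if_neg h]
        rw [hcount r c h]
    rw [hval1, hval2]
    refine Finset.sum_le_sum fun j hj => ?_
    have h1 : (∑ k ∈ ({ι j}ᶜ : Finset (Fin N)), A k (σ' j k)) ≤ permP A L (ι j) := by
      rw [permP_def]
      refine Finset.le_sup (f := fun σ : Equiv.Perm (Fin N) =>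
        ∑ k ∈ ({ι j}ᶜ : Finset (Fin N)), A k (σ k)) ?_
      rw [Finset.mem_filter]
      exact ⟨Finset.mem_univ _, hσ'L j hj⟩
    calc (∑ k ∈ ({ι j}ᶜ : Finset (Fin N)), A k (σ' j k)) + A (ι j) j
        ≤ permP A L (ι j) + A (ι j) j := add_le_add_left h1 _
      _ ≤ Finset.univ.sup fun i => permP A L i + A i j :=
          Finset.le_sup (f := fun i => permP A L i + A i j) (Finset.mem_univ (ι j))
  -- direction ≥
  · have hch : ∀ j : Fin N, ∃ p : Fin N × Equiv.Perm (Fin N), p.2 p.1 = L ∧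
        (Finset.univ.sup fun i => permP A L i + A i j)
          = (∑ k ∈ ({p.1}ᶜ : Finset (Fin N)), A k (p.2 k)) + A p.1 j := by
      intro j
      haveI : Nonempty (Fin N) := ⟨L⟩
      obtain ⟨i, _, hieq⟩ :=
        Finset.exists_mem_eq_sup Finset.univ
          (Finset.univ_nonempty (α := Fin N)) (fun i => permP A L i + A i j)
      obtain ⟨σ, hmem, hseq⟩ :=
        Finset.exists_mem_eq_sup _ (permP_filter_nonempty L i)
          (fun σ : Equiv.Perm (Fin N) => ∑ k ∈ ({i}ᶜ : Finset (Fin N)), A k (σ k))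
      rw [Finset.mem_filter] at hmem
      exact ⟨(i, σ), hmem.2, by rw [hieq, permP_def, hseq]⟩
    choose p hpL hpM using hch
    set ι : Fin N → Fin N := fun j => (p j).1 with hι
    set σs : Fin N → Equiv.Perm (Fin N) := fun j => (p j).2 with hσs
    set W : Fin N → Fin N → ℕ := fun r c =>
      (if c = L then 0 else ((Finset.univ.erase L).filter fun j => σs j r = c).card)
      + (if c = L then 0 else if ι c = r then 1 else 0) with hW
    have hWL : ∀ r, W r L = 0 := fun r => by simp [hW]
    have hrow : ∀ r, (∑ c, W r c) + 1 = N := by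
      intro r
      have e0 : ∑ c, W r c
          = ∑ c, (if c = L then 0 else ((Finset.univ.erase L).filter fun j => σs j r = c).card)
            + ∑ c, (if c = L then 0 else if ι c = r then 1 else 0) :=
        Finset.sum_add_distrib
      have e1 : ∑ c, (if c = L then 0
            else ((Finset.univ.erase L).filter fun j => σs j r = c).card)
            + ((Finset.univ.erase L).filter fun j => σs j r = L).card
          = (Finset.univ.erase L).card := by
        rw [sum_ite_erase L (fun c => ((Finset.univ.erase L).filter fun j => σs j r = c).card)]
        rw [Finset.sum_erase_add _ (fun c => ((Finset.univ.erase L).filter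
          fun j => σs j r = c).card) (Finset.mem_univ L)]
        exact sum_count (Finset.univ.erase L) (fun j => σs j r)
      have e2 : ((Finset.univ.erase L).filter fun j => σs j r = L)
          = ((Finset.univ.erase L).filter fun j => ι j = r) := by
        refine Finset.filter_congr fun j hj => ?_
        constructor
        · intro h
          have : σs j r = σs j (ι j) := by rw [h, hpL j]
          exact ((σs j).injective this).symm
        · intro h
          rw [← h]
          exact hpL j
      have e3 : ∑ c, (if c = L then 0 else if ι c = r then 1 else 0)
          = ((Finset.univ.erase L).filter fun c => ι c = r).card := by
        rw [sum_ite_erase L (fun c => if ι c = r then 1 else 0), Finset.card_filter]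
      rw [e0]
      rw [e2] at e1
      omega
    have hcol : ∀ c, c ≠ L → ∑ r, W r c = N := by
      intro c hc
      have e1 : ∀ r, W r c = ((Finset.univ.erase L).filter fun j => σs j r = c).card
          + (if ι c = r then 1 else 0) := fun r => by simp [hW, hc]
      rw [Finset.sum_congr rfl fun r _ => e1 r, Finset.sum_add_distrib]
      rw [sum_card_filter_perm (Finset.univ.erase L) σs c]
      have e2 : ∑ r, (if ι c = r then 1 else 0) = 1 := by simp
      omega
    obtain ⟨ρ, hρL, hρcount⟩ := exists_LHS_family L W hWL hrow hcol
    have hval1 : ∑ j ∈ Finset.univ.erase L, (Finset.univ.sup fun i => permP A L i + A i j)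
        = valM A W := by
      rw [Finset.sum_congr rfl fun j _ => hpM j, Finset.sum_add_distrib]
      rw [val_family A L (Finset.univ.erase L) σs ι
        (fun j _ => hpL j), val_extra A L ι, ← valM_add]
    have hval2 : valM A W = ∑ i, ∑ k ∈ ({i}ᶜ : Finset (Fin N)), A k (ρ i k) := by
      rw [val_family A L Finset.univ ρ (fun i => i) (fun i _ => hρL i)]
      congr 1
      funext r c
      by_cases h : c = L
      · simp [hW, h]
      · simp only [if_neg h]
        rw [hρcount r c h]
    rw [hval1, hval2]
    refine Finset.sum_le_sum fun i _ => ?_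
    rw [permP_def]
    refine Finset.le_sup (f := fun σ : Equiv.Perm (Fin N) =>
      ∑ k ∈ ({i}ᶜ : Finset (Fin N)), A k (σ k)) ?_
    rw [Finset.mem_filter]
    exact ⟨Finset.mem_univ _, hρL i⟩

theorem tdetFull_replace {N : ℕ} (A : Fin N → Fin N → WithBot ℤ) (L j : Fin N) :
    tdetFull (fun r k => if k = L then A r j else A r k)
      = Finset.univ.sup fun i => permP A L i + A i j := by
  classical
  set B : Fin N → Fin N → WithBot ℤ := fun r k => if k = L then A r j else A r k with hB
  have hBsum : ∀ σ : Equiv.Perm (Fin N), σ.symm L = σ.symm L →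
      ∑ k, B k (σ k) = (∑ k ∈ ({σ.symm L}ᶜ : Finset (Fin N)), A k (σ k)) + A (σ.symm L) j := by
    intro σ _
    rw [← Finset.sum_compl_add_sum ({σ.symm L} : Finset (Fin N)) (fun k => B k (σ k)),
      Finset.sum_singleton]
    congr 1
    · refine Finset.sum_congr rfl fun k hk => ?_
      rw [Finset.mem_compl, Finset.mem_singleton] at hk
      have hkL : σ k ≠ L := by
        intro hcon
        exact hk (by rw [← hcon, Equiv.symm_apply_apply])
      simp [hB, hkL]
    · have h1 : σ (σ.symm L) = L := Equiv.apply_symm_apply σ L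
      rw [h1]
      simp [hB]
  apply le_antisymm
  · rw [tdetFull]
    apply Finset.sup_le
    intro σ _
    rw [hBsum σ rfl]
    have h1 : (∑ k ∈ ({σ.symm L}ᶜ : Finset (Fin N)), A k (σ k)) ≤ permP A L (σ.symm L) := by
      rw [permP_def]
      refine Finset.le_sup (f := fun τ : Equiv.Perm (Fin N) =>
        ∑ k ∈ ({σ.symm L}ᶜ : Finset (Fin N)), A k (τ k)) ?_
      rw [Finset.mem_filter]
      exact ⟨Finset.mem_univ _, Equiv.apply_symm_apply σ L⟩
    calc (∑ k ∈ ({σ.symm L}ᶜ : Finset (Fin N)), A k (σ k)) + A (σ.symm L) j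
        ≤ permP A L (σ.symm L) + A (σ.symm L) j := add_le_add_left h1 _
      _ ≤ Finset.univ.sup fun i => permP A L i + A i j :=
          Finset.le_sup (f := fun i => permP A L i + A i j) (Finset.mem_univ (σ.symm L))
  · apply Finset.sup_le
    intro i _
    rw [permP_def, sup_add_wb]
    apply Finset.sup_le
    intro σ hσ
    rw [Finset.mem_filter] at hσ
    have hi : σ.symm L = i := by rw [← hσ.2, Equiv.symm_apply_apply]
    have h2 := hBsum σ rfl
    rw [hi] at h2
    rw [← h2, tdetFull]
    exact Finset.le_sup (f := fun σ : Equiv.Perm (Fin N) => ∑ k, B k (σ k)) (Finset.mem_univ σ)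

/-- Jacobi's tropical identity for resolvent orders.  Let `A` be a square
matrix over `ℤ ∪ {−∞}` whose diagonal is a maximal transversal sum, let
`𝒪̄_{i,last}` be the tropical determinant of `A` with row `i` and the last
column deleted, and let `A_{[j]}` be `A` with its last column replaced by
column `j`.  Then `∑_i 𝒪̄_{i,last} = ∑_{j ≠ last} |A_{[j]}|_T`, and equivalently
`∑_i 𝒪̄_{i,last} = ∑_{j ≠ last} max_i (𝒪̄_{i,last} + a_{i,j})`. -/
theorem resolvent_tropical_identity (n : ℕ)
    (A : Fin (n + 1) → Fin (n + 1) → WithBot ℤ)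
    (hdiag : ∑ i, A i i = tdetFull A) :
    (∑ i, tdetSub A ({i}ᶜ) ({Fin.last n}ᶜ)
        = ∑ j ∈ Finset.univ.erase (Fin.last n),
            tdetFull (fun i k => if k = Fin.last n then A i j else A i k)) ∧
      (∑ i, tdetSub A ({i}ᶜ) ({Fin.last n}ᶜ)
        = ∑ j ∈ Finset.univ.erase (Fin.last n),
            Finset.univ.sup fun i =>
              tdetSub A ({i}ᶜ) ({Fin.last n}ᶜ) + A i j) := by
  have hsub : ∀ i, tdetSub A ({i}ᶜ) ({Fin.last n}ᶜ) = permP A (Fin.last n) i := by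
    intro i
    rw [tdetSub_eq_permSup, permP_def]
  have key2 : ∑ i, tdetSub A ({i}ᶜ) ({Fin.last n}ᶜ)
      = ∑ j ∈ Finset.univ.erase (Fin.last n),
          Finset.univ.sup fun i => tdetSub A ({i}ᶜ) ({Fin.last n}ᶜ) + A i j := by
    simp only [hsub]
    exact main_sum A (Fin.last n)
  have key1 : ∑ i, tdetSub A ({i}ᶜ) ({Fin.last n}ᶜ)
      = ∑ j ∈ Finset.univ.erase (Fin.last n),
          tdetFull (fun i k => if k = Fin.last n then A i j else A i k) := by
    rw [key2]
    refine Finset.sum_congr rfl fun j _ => ?_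
    rw [tdetFull_replace A (Fin.last n) j]
    simp only [hsub]
  exact ⟨key1, key2⟩
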